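/- Let P ∈ ℝ[x, y] be a nonzero polynomial of total degree s, and suppose there exists L ∈ ℕ such that P(m, k) ≥ 0 for all integers m, k ≥ L. Then there exist ε > 0 and T₀ > 0 such that for every T ≥ T₀, Σ P(m, k) ≥ ε T^{s+2}, where the sum ranges over all pairs (m, k) of natural numbers with m ≥ L, k ≥ L and m + k ≤ T. -/
import Mathlib

open Finset fwdDiff

lemma fwdDiff_pow_eq (h : ℝ) (p : ℕ) :
    Δ_[h] (fun x : ℝ => x ^ p) =
      ∑ t ∈ Finset.range p, (((p.choose t : ℝ) * h ^ (p - t)) • fun x : ℝ => x ^ t) := by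
  funext x
  simp only [fwdDiff, Finset.sum_apply, Pi.smul_apply, smul_eq_mul]
  rw [add_pow, Finset.sum_range_succ]
  simp only [Nat.choose_self, Nat.sub_self, pow_zero, Nat.cast_one, mul_one, one_mul,
    add_sub_cancel_right]
  apply Finset.sum_congr rfl
  intro t ht
  ring

lemma fdzero (h : ℝ) : ∀ p : ℕ, ∀ a : ℕ, p < a →
    (Δ_[h])^[a] (fun x : ℝ => x ^ p) = fun _ => 0 := by
  intro p
  induction p using Nat.strong_induction_on with
  | _ p IH =>
    intro a hpa
    obtain ⟨a', rfl⟩ : ∃ a', a = a' + 1 := ⟨a - 1, by omega⟩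
    rw [Function.iterate_succ_apply, fwdDiff_pow_eq, fwdDiff_iter_finset_sum]
    funext x
    simp only [Finset.sum_apply, Pi.zero_apply]
    apply Finset.sum_eq_zero
    intro t ht
    rw [fwdDiff_iter_const_smul, IH t (Finset.mem_range.mp ht) a' (by
      have := Finset.mem_range.mp ht; omega)]
    simp

lemma fdtop (h : ℝ) : ∀ a : ℕ,
    (Δ_[h])^[a] (fun x : ℝ => x ^ a) = fun _ => (a.factorial : ℝ) * h ^ a := by
  intro a
  induction a with
  | zero => funext x; simp
  | succ a IH =>
    rw [Function.iterate_succ_apply, fwdDiff_pow_eq, fwdDiff_iter_finset_sum,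
      Finset.sum_range_succ]
    funext x
    simp only [Finset.sum_apply, Pi.add_apply]
    rw [Finset.sum_eq_zero (fun t ht => by
      rw [fwdDiff_iter_const_smul, fdzero h t a (Finset.mem_range.mp ht)]; simp)]
    rw [fwdDiff_iter_const_smul, IH]
    simp only [Pi.smul_apply, smul_eq_mul, zero_add, Nat.choose_succ_self_right]
    rw [show a + 1 - a = 1 by omega, pow_one]
    push_cast [Nat.factorial_succ]
    ring

lemma double_diff (P : MvPolynomial (Fin 2) ℝ) (d₀ : Fin 2 →₀ ℕ)
    (hmax : ∀ d ∈ P.support, d 0 + d 1 ≤ d₀ 0 + d₀ 1)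
    (h u v : ℝ) :
    (Δ_[h])^[d₀ 1] (fun y => (Δ_[h])^[d₀ 0] (fun x => MvPolynomial.eval ![x, y] P) u) v
      = ((d₀ 0).factorial : ℝ) * ((d₀ 1).factorial : ℝ) * P.coeff d₀ * h ^ (d₀ 0 + d₀ 1) := by
  set a := d₀ 0 with ha
  set b := d₀ 1 with hb
  have inner : ∀ y : ℝ, (fun x => MvPolynomial.eval ![x, y] P)
      = ∑ d ∈ P.support, ((P.coeff d * y ^ d 1) • fun x : ℝ => x ^ d 0) := by
    intro y; funext x
    rw [MvPolynomial.eval_eq']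
    simp only [Finset.sum_apply, Pi.smul_apply, smul_eq_mul, Fin.prod_univ_two,
      Matrix.cons_val_zero, Matrix.cons_val_one, Matrix.head_cons]
    exact Finset.sum_congr rfl fun d _ => by ring
  have step1 : (fun y : ℝ => (Δ_[h])^[a] (fun x => MvPolynomial.eval ![x, y] P) u)
      = ∑ d ∈ P.support,
          ((P.coeff d * ((Δ_[h])^[a] (fun x : ℝ => x ^ d 0) u)) • fun y : ℝ => y ^ d 1) := by
    funext y
    rw [inner y, fwdDiff_iter_finset_sum]
    simp only [Finset.sum_apply, Pi.smul_apply, smul_eq_mul]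
    refine Finset.sum_congr rfl fun d _ => ?_
    rw [fwdDiff_iter_const_smul]
    simp only [Pi.smul_apply, smul_eq_mul]
    ring
  rw [step1, fwdDiff_iter_finset_sum]
  simp only [Finset.sum_apply]
  rw [Finset.sum_eq_single d₀ ?_ ?_]
  · rw [fwdDiff_iter_const_smul, fdtop, fdtop]
    simp only [Pi.smul_apply, smul_eq_mul]
    rw [pow_add]; ring
  · intro d hd hne
    have hd2 : d 0 + d 1 ≤ a + b := hmax d hd
    have hne2 : d 0 ≠ a ∨ d 1 ≠ b := by
      by_contra hcon
      push_neg at hcon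
      refine hne (Finsupp.ext fun i => ?_)
      fin_cases i
      · exact hcon.1
      · exact hcon.2
    rw [fwdDiff_iter_const_smul]
    simp only [Pi.smul_apply, smul_eq_mul]
    rcases Nat.lt_or_ge (d 0) a with h0 | h0
    · rw [fdzero h (d 0) a h0]; simp
    · have h1 : d 1 < b := by rcases hne2 with h' | h' <;> omega
      rw [fdzero h (d 1) b h1]; simp
  · intro hd
    rw [MvPolynomial.notMem_support_iff.mp hd]
    simp only [zero_mul, zero_smul]
    rw [show (0 : ℝ → ℝ) = ((0:ℝ) • fun y : ℝ => y ^ 0) by funext; simp,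
      fwdDiff_iter_const_smul]
    simp

lemma choose_le_two_pow' (n i : ℕ) (hi : i ∈ Finset.range (n + 1)) :
    ((n.choose i : ℝ)) ≤ 2 ^ n := by
  have h1 : n.choose i ≤ 2 ^ n := by
    calc n.choose i ≤ ∑ j ∈ Finset.range (n + 1), n.choose j :=
          Finset.single_le_sum (fun _ _ => Nat.zero_le _) hi
      _ = 2 ^ n := Nat.sum_range_choose n
  exact_mod_cast h1

lemma block_lb (P : MvPolynomial (Fin 2) ℝ) (d₀ : Fin 2 →₀ ℕ)
    (hmax : ∀ d ∈ P.support, d 0 + d 1 ≤ d₀ 0 + d₀ 1)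
    (L : ℕ)
    (hpos : ∀ m k : ℕ, L ≤ m → L ≤ k → 0 ≤ MvPolynomial.eval ![(m : ℝ), (k : ℝ)] P)
    (m k N : ℕ) (hm : L ≤ m) (hk : L ≤ k) :
    ((d₀ 0).factorial : ℝ) * ((d₀ 1).factorial : ℝ) * |P.coeff d₀| * (N : ℝ) ^ (d₀ 0 + d₀ 1)
      ≤ 2 ^ (d₀ 0 + d₀ 1) *
        ∑ i ∈ Finset.range (d₀ 0 + 1), ∑ j ∈ Finset.range (d₀ 1 + 1),
          MvPolynomial.eval ![((m + i * N : ℕ) : ℝ), ((k + j * N : ℕ) : ℝ)] P := by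
  set a := d₀ 0 with ha
  set b := d₀ 1 with hb
  have pt : ∀ (x i : ℕ), (x : ℝ) + i • (N : ℝ) = ((x + i * N : ℕ) : ℝ) := by
    intro x i; push_cast [nsmul_eq_mul]; ring
  have expand : (a.factorial : ℝ) * (b.factorial : ℝ) * P.coeff d₀ * (N : ℝ) ^ (a + b)
      = ∑ j ∈ Finset.range (b + 1), ∑ i ∈ Finset.range (a + 1),
          (((-1 : ℝ) ^ (b - j) * (b.choose j)) * ((-1 : ℝ) ^ (a - i) * (a.choose i))) *
            MvPolynomial.eval ![((m + i * N : ℕ) : ℝ), ((k + j * N : ℕ) : ℝ)] P := by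
    rw [← double_diff P d₀ hmax (N : ℝ) (m : ℝ) (k : ℝ), fwdDiff_iter_eq_sum_shift]
    refine Finset.sum_congr rfl fun j _ => ?_
    rw [fwdDiff_iter_eq_sum_shift, Finset.smul_sum]
    refine Finset.sum_congr rfl fun i _ => ?_
    rw [pt k j, pt m i]
    rw [zsmul_eq_mul, zsmul_eq_mul]
    push_cast
    ring
  have hnn : ∀ i j : ℕ,
      0 ≤ MvPolynomial.eval ![((m + i * N : ℕ) : ℝ), ((k + j * N : ℕ) : ℝ)] P :=
    fun i j => hpos _ _ (le_trans hm (Nat.le_add_right m _)) (le_trans hk (Nat.le_add_right k _))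
  have habs : (a.factorial : ℝ) * (b.factorial : ℝ) * |P.coeff d₀| * (N : ℝ) ^ (a + b)
      = |(a.factorial : ℝ) * (b.factorial : ℝ) * P.coeff d₀ * (N : ℝ) ^ (a + b)| := by
    rw [abs_mul, abs_mul, abs_mul, abs_of_nonneg (a := (a.factorial : ℝ)) (by positivity),
      abs_of_nonneg (a := (b.factorial : ℝ)) (by positivity),
      abs_of_nonneg (a := (N : ℝ) ^ (a + b)) (by positivity)]
  rw [habs, expand]
  calc |∑ j ∈ Finset.range (b + 1), ∑ i ∈ Finset.range (a + 1), _|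
      ≤ ∑ j ∈ Finset.range (b + 1), ∑ i ∈ Finset.range (a + 1),
          |(((-1 : ℝ) ^ (b - j) * (b.choose j)) * ((-1 : ℝ) ^ (a - i) * (a.choose i))) *
            MvPolynomial.eval ![((m + i * N : ℕ) : ℝ), ((k + j * N : ℕ) : ℝ)] P| := by
        refine le_trans (Finset.abs_sum_le_sum_abs _ _) ?_
        exact Finset.sum_le_sum fun j _ => Finset.abs_sum_le_sum_abs _ _
    _ ≤ ∑ j ∈ Finset.range (b + 1), ∑ i ∈ Finset.range (a + 1),
          (2 ^ (a + b)) *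
            MvPolynomial.eval ![((m + i * N : ℕ) : ℝ), ((k + j * N : ℕ) : ℝ)] P := by
        refine Finset.sum_le_sum fun j hj => Finset.sum_le_sum fun i hi => ?_
        simp only [abs_mul, abs_pow, abs_neg, abs_one, one_pow, one_mul]
        rw [abs_of_nonneg (hnn i j),
          abs_of_nonneg (a := ((b.choose j : ℝ))) (by positivity),
          abs_of_nonneg (a := ((a.choose i : ℝ))) (by positivity)]
        have h2 : ((b.choose j : ℝ)) * ((a.choose i : ℝ)) ≤ 2 ^ (a + b) := by
          calc ((b.choose j : ℝ)) * ((a.choose i : ℝ)) ≤ 2 ^ b * 2 ^ a :=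
                mul_le_mul (choose_le_two_pow' b j hj) (choose_le_two_pow' a i hi)
                  (by positivity) (by positivity)
            _ = 2 ^ (a + b) := by rw [← pow_add]; ring_nf
        exact mul_le_mul_of_nonneg_right h2 (hnn i j)
    _ = 2 ^ (a + b) * ∑ i ∈ Finset.range (a + 1), ∑ j ∈ Finset.range (b + 1),
          MvPolynomial.eval ![((m + i * N : ℕ) : ℝ), ((k + j * N : ℕ) : ℝ)] P := by
        rw [Finset.sum_comm, Finset.mul_sum]
        exact Finset.sum_congr rfl fun i _ => by rw [Finset.mul_sum]

set_option maxHeartbeats 1000000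

open scoped Classical

/-- Let `P ∈ ℝ[x, y]` be a nonzero polynomial of total degree `s` with
`P(m, k) ≥ 0` for all integers `m, k ≥ L`.  Then there are `ε > 0` and `T₀ > 0` such that
for every `T ≥ T₀` one has `Σ P(m, k) ≥ ε T^{s+2}`, the sum ranging over pairs `(m, k)` of
naturals with `m, k ≥ L` and `m + k ≤ T`. -/
theorem stmt_9 (P : MvPolynomial (Fin 2) ℝ) (hP : P ≠ 0) (s : ℕ)
    (hdeg : P.totalDegree = s) (L : ℕ)
    (hpos : ∀ m k : ℕ, L ≤ m → L ≤ k →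
      0 ≤ MvPolynomial.eval ![(m : ℝ), (k : ℝ)] P) :
    ∃ ε : ℝ, 0 < ε ∧ ∃ T₀ : ℝ, 0 < T₀ ∧ ∀ T : ℝ, T₀ ≤ T →
      ε * T ^ (s + 2) ≤
        ∑ p ∈ Finset.filter
            (fun p : ℕ × ℕ => L ≤ p.1 ∧ L ≤ p.2 ∧ ((p.1 : ℝ) + (p.2 : ℝ)) ≤ T)
            (Finset.range (⌈T⌉₊ + 1) ×ˢ Finset.range (⌈T⌉₊ + 1)),
          MvPolynomial.eval ![(p.1 : ℝ), (p.2 : ℝ)] P := by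
  -- extract a top-degree monomial
  have hsum2 : ∀ d : Fin 2 →₀ ℕ, (d.sum fun _ e => e) = d 0 + d 1 := by
    intro d
    rw [Finsupp.sum_fintype _ _ (fun _ => rfl), Fin.sum_univ_two]
  obtain ⟨d₀, hd₀, hs⟩ : ∃ d ∈ P.support, (d.sum fun _ e => e) = s := by
    obtain ⟨d, hd, hval⟩ := Finset.exists_mem_eq_sup P.support
      (MvPolynomial.support_nonempty.mpr hP) (fun m : Fin 2 →₀ ℕ => m.sum fun _ e => e)
    exact ⟨d, hd, by rw [← hval, ← MvPolynomial.totalDegree, hdeg]⟩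
  set a := d₀ 0 with ha
  set b := d₀ 1 with hb
  have hab : a + b = s := by rw [← hsum2 d₀]; exact hs
  have hmax : ∀ d ∈ P.support, d 0 + d 1 ≤ a + b := by
    intro d hd
    have h1 := MvPolynomial.le_totalDegree hd
    rw [hdeg, ← hab] at h1
    rw [← hsum2 d]
    exact h1
  have hc : P.coeff d₀ ≠ 0 := MvPolynomial.mem_support_iff.mp hd₀
  have hcpos : 0 < |P.coeff d₀| := abs_pos.mpr hc
  set K : ℝ := (a.factorial : ℝ) * (b.factorial : ℝ) * |P.coeff d₀| / 2 ^ s with hK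
  have hKpos : 0 < K := by positivity
  refine ⟨K / (2 * ((s : ℝ) + 2)) ^ (s + 2), by positivity,
    (4 * L + 2 * s + 4 : ℝ), by positivity, ?_⟩
  intro T hT
  have hs2 : (0 : ℝ) < (s : ℝ) + 2 := by positivity
  have hL0 : (0 : ℝ) ≤ (L : ℝ) := Nat.cast_nonneg L
  have hs0 : (0 : ℝ) ≤ (s : ℝ) := Nat.cast_nonneg s
  have hTpos : (0 : ℝ) < T := lt_of_lt_of_le (by positivity) hT
  set N : ℕ := ⌊(T - 2 * L) / ((s : ℝ) + 2)⌋₊ with hN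
  have hfrac : (0 : ℝ) ≤ (T - 2 * L) / ((s : ℝ) + 2) := by
    apply div_nonneg _ (le_of_lt hs2); linarith
  have hNle : (N : ℝ) ≤ (T - 2 * L) / ((s : ℝ) + 2) := Nat.floor_le hfrac
  have hNs : (N : ℝ) * ((s : ℝ) + 2) ≤ T - 2 * L := (le_div_iff₀ hs2).mp hNle
  have hNge : T / (2 * ((s : ℝ) + 2)) ≤ (N : ℝ) := by
    have h2 := Nat.sub_one_lt_floor ((T - 2 * L) / ((s : ℝ) + 2))
    rw [← hN] at h2
    have h3 : (T - 2 * L) / ((s : ℝ) + 2) * ((s : ℝ) + 2) = T - 2 * L :=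
      div_mul_cancel₀ _ (ne_of_gt hs2)
    have h4 : (T - 2 * L) - ((s : ℝ) + 2) < (N : ℝ) * ((s : ℝ) + 2) := by
      have := mul_lt_mul_of_pos_right h2 hs2
      nlinarith
    rw [div_le_iff₀ (by positivity)]
    nlinarith
  have hNpos : 0 < N := by
    by_contra hcon
    push_neg at hcon
    interval_cases N
    · simp only [Nat.cast_zero] at hNge
      have h5 := (div_le_iff₀ (by positivity : (0:ℝ) < 2 * ((s : ℝ) + 2))).mp hNge
      nlinarith
  -- index set and embedding
  set I : Finset ((ℕ × ℕ) × (ℕ × ℕ)) :=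
    (Finset.range N ×ˢ Finset.range N) ×ˢ (Finset.range (a + 1) ×ˢ Finset.range (b + 1)) with hI
  set φ : (ℕ × ℕ) × (ℕ × ℕ) → ℕ × ℕ :=
    fun q => (L + q.1.1 + q.2.1 * N, L + q.1.2 + q.2.2 * N) with hφ
  set A := Finset.filter
      (fun p : ℕ × ℕ => L ≤ p.1 ∧ L ≤ p.2 ∧ ((p.1 : ℝ) + (p.2 : ℝ)) ≤ T)
      (Finset.range (⌈T⌉₊ + 1) ×ˢ Finset.range (⌈T⌉₊ + 1)) with hA
  have hmemI : ∀ q ∈ I, (q.1.1 < N ∧ q.1.2 < N) ∧ q.2.1 ≤ a ∧ q.2.2 ≤ b := by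
    intro q hq
    simp only [hI, Finset.mem_product, Finset.mem_range] at hq
    exact ⟨⟨hq.1.1, hq.1.2⟩, ⟨by omega, by omega⟩⟩
  have hsub : ∀ q ∈ I, φ q ∈ A := by
    intro q hq
    obtain ⟨⟨hr, hr'⟩, hi, hj⟩ := hmemI q hq
    have hsumle : ((L + q.1.1 + q.2.1 * N : ℕ) : ℝ) + ((L + q.1.2 + q.2.2 * N : ℕ) : ℝ) ≤ T := by
      push_cast
      have hij : (q.2.1 : ℝ) + (q.2.2 : ℝ) ≤ (s : ℝ) := by
        have : q.2.1 + q.2.2 ≤ s := by omega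
        exact_mod_cast this
      have hrr : (q.1.1 : ℝ) + 1 ≤ (N : ℝ) := by exact_mod_cast hr
      have hrr' : (q.1.2 : ℝ) + 1 ≤ (N : ℝ) := by exact_mod_cast hr'
      have hijN : (q.2.1 : ℝ) * N + (q.2.2 : ℝ) * N ≤ (s : ℝ) * N := by
        have hN0 : (0 : ℝ) ≤ (N : ℝ) := Nat.cast_nonneg N
        nlinarith
      nlinarith
    have h1 : (((φ q).1 : ℝ)) ≤ T := by
      have h2 : (0 : ℝ) ≤ ((φ q).2 : ℝ) := Nat.cast_nonneg _
      simp only [hφ] at hsumle ⊢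
      linarith
    have h1' : (((φ q).2 : ℝ)) ≤ T := by
      have h2 : (0 : ℝ) ≤ ((φ q).1 : ℝ) := Nat.cast_nonneg _
      simp only [hφ] at hsumle ⊢
      linarith
    have hce : ∀ x : ℕ, (x : ℝ) ≤ T → x < ⌈T⌉₊ + 1 := by
      intro x hx
      have : (x : ℝ) ≤ (⌈T⌉₊ : ℝ) := le_trans hx (Nat.le_ceil T)
      have : x ≤ ⌈T⌉₊ := by exact_mod_cast this
      omega
    rw [hA, Finset.mem_filter, Finset.mem_product, Finset.mem_range, Finset.mem_range]
    refine ⟨⟨hce _ h1, hce _ h1'⟩, ?_, ?_, hsumle⟩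
    · simp only [hφ]; omega
    · simp only [hφ]; omega
  have hinj : ∀ q ∈ I, ∀ q' ∈ I, φ q = φ q' → q = q' := by
    intro q hq q' hq' heq
    obtain ⟨⟨hr, hr'⟩, _, _⟩ := hmemI q hq
    obtain ⟨⟨hs1, hs1'⟩, _, _⟩ := hmemI q' hq'
    have huniq : ∀ r r' i i' : ℕ, r < N → r' < N → L + r + i * N = L + r' + i' * N →
        r = r' ∧ i = i' := by
      intro r r' i i' h1 h2 h3
      have h4 : r + i * N = r' + i' * N := by omega
      have h5 : r = r' := by
        have e1 : (r + i * N) % N = r := by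
          rw [Nat.add_mul_mod_self_right, Nat.mod_eq_of_lt h1]
        have e2 : (r' + i' * N) % N = r' := by
          rw [Nat.add_mul_mod_self_right, Nat.mod_eq_of_lt h2]
        rw [← e1, ← e2, h4]
      refine ⟨h5, ?_⟩
      subst h5
      have h6 : i * N = i' * N := by omega
      exact Nat.eq_of_mul_eq_mul_right hNpos h6
    have e1 := congrArg Prod.fst heq
    have e2 := congrArg Prod.snd heq
    simp only [hφ] at e1 e2
    obtain ⟨ea, eb⟩ := huniq _ _ _ _ hr hs1 e1
    obtain ⟨ec, ed⟩ := huniq _ _ _ _ hr' hs1' e2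
    ext <;> assumption
  -- block lower bound
  have hblock : ∀ r r' : ℕ, K * (N : ℝ) ^ s ≤
      ∑ i ∈ Finset.range (a + 1), ∑ j ∈ Finset.range (b + 1),
        MvPolynomial.eval ![(((L + r) + i * N : ℕ) : ℝ), (((L + r') + j * N : ℕ) : ℝ)] P := by
    intro r r'
    have hbl := block_lb P d₀ hmax L hpos (L + r) (L + r') N
      (Nat.le_add_right L r) (Nat.le_add_right L r')
    rw [← ha, ← hb, hab] at hbl
    rw [hK, div_mul_eq_mul_div, div_le_iff₀ (by positivity : (0:ℝ) < 2 ^ s)]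
    calc (a.factorial : ℝ) * (b.factorial : ℝ) * |P.coeff d₀| * (N : ℝ) ^ s
        ≤ 2 ^ s * ∑ i ∈ Finset.range (a + 1), ∑ j ∈ Finset.range (b + 1),
            MvPolynomial.eval ![(((L + r) + i * N : ℕ) : ℝ), (((L + r') + j * N : ℕ) : ℝ)] P :=
          hbl
      _ = _ := by ring
  -- assemble
  have key : (K * (N : ℝ) ^ s) * (N : ℝ) ^ 2 ≤ ∑ p ∈ A, MvPolynomial.eval ![(p.1 : ℝ), (p.2 : ℝ)] P := by
    have step1 : ∑ q ∈ I, MvPolynomial.eval ![((φ q).1 : ℝ), ((φ q).2 : ℝ)] P ≤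
        ∑ p ∈ A, MvPolynomial.eval ![(p.1 : ℝ), (p.2 : ℝ)] P := by
      have himg : ∑ q ∈ I, MvPolynomial.eval ![((φ q).1 : ℝ), ((φ q).2 : ℝ)] P
          = ∑ p ∈ I.image φ, MvPolynomial.eval ![(p.1 : ℝ), (p.2 : ℝ)] P :=
        (Finset.sum_image (f := fun p : ℕ × ℕ => MvPolynomial.eval ![(p.1 : ℝ), (p.2 : ℝ)] P) hinj).symm
      rw [himg]
      apply Finset.sum_le_sum_of_subset_of_nonneg
      · intro p hp
        obtain ⟨q, hq, rfl⟩ := Finset.mem_image.mp hp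
        exact hsub q hq
      · intro p hp _
        rw [hA, Finset.mem_filter] at hp
        exact hpos p.1 p.2 hp.2.1 hp.2.2.1
    refine le_trans ?_ step1
    rw [hI, Finset.sum_product]
    have step2 : ∀ rr' ∈ Finset.range N ×ˢ Finset.range N,
        K * (N : ℝ) ^ s ≤ ∑ ij ∈ Finset.range (a + 1) ×ˢ Finset.range (b + 1),
          MvPolynomial.eval ![((φ (rr', ij)).1 : ℝ), ((φ (rr', ij)).2 : ℝ)] P := by
      intro rr' _
      rw [Finset.sum_product]
      simp only [hφ]
      exact hblock rr'.1 rr'.2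
    calc (K * (N : ℝ) ^ s) * (N : ℝ) ^ 2
        = ∑ _rr' ∈ Finset.range N ×ˢ Finset.range N, K * (N : ℝ) ^ s := by
          rw [Finset.sum_const, Finset.card_product, Finset.card_range, nsmul_eq_mul]
          push_cast; ring
      _ ≤ _ := Finset.sum_le_sum step2
  calc K / (2 * ((s : ℝ) + 2)) ^ (s + 2) * T ^ (s + 2)
      = K * (T / (2 * ((s : ℝ) + 2))) ^ (s + 2) := by
        rw [div_pow]; ring
    _ ≤ K * (N : ℝ) ^ (s + 2) := by
        apply mul_le_mul_of_nonneg_left _ (le_of_lt hKpos)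
        exact pow_le_pow_left₀ (by positivity) hNge _
    _ = (K * (N : ℝ) ^ s) * (N : ℝ) ^ 2 := by rw [pow_add]; ring
    _ ≤ _ := key
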